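/- Let Σ be a k×k symmetric positive definite matrix, μ ∈ ℝ^k, μ̃ = 𝟏 + μ, A = Σ + μ̃μ̃'. Then the GMV portfolio with respect to A satisfies A⁻¹𝟏/(𝟏'A⁻¹𝟏) = Σ⁻¹𝟏/(𝟏'Σ⁻¹𝟏) - ((1 + R_GMV)/(1 + s))·Qμ, where Q = Σ⁻¹ - (Σ⁻¹𝟏𝟏'Σ⁻¹)/(𝟏'Σ⁻¹𝟏), R_GMV = (𝟏'Σ⁻¹μ)/(𝟏'Σ⁻¹𝟏), s = μ'Qμ. -/

import Mathlib

open Matrix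

private lemma vmv_mulVec {k : ℕ} (u v x : Fin k → ℝ) :
    vecMulVec u v *ᵥ x = (v ⬝ᵥ x) • u := by
  funext i
  simp [vecMulVec_apply, mulVec, dotProduct, Finset.mul_sum, mul_comm, mul_assoc, mul_left_comm]

theorem stmt18 {k : ℕ} (S : Matrix (Fin k) (Fin k) ℝ) (hS : S.PosDef)
    (one : Fin k → ℝ) (hone : one = fun _ => (1:ℝ))
    (μ : Fin k → ℝ) (A : Matrix (Fin k) (Fin k) ℝ)
    (hA : A = S + vecMulVec (one + μ) (one + μ))
    (Q : Matrix (Fin k) (Fin k) ℝ)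
    (hQ : Q = S⁻¹ - (one ⬝ᵥ S⁻¹ *ᵥ one)⁻¹ • vecMulVec (S⁻¹ *ᵥ one) (one ᵥ* S⁻¹))
    (Rg s : ℝ)
    (hRg : Rg = (one ⬝ᵥ S⁻¹ *ᵥ μ) / (one ⬝ᵥ S⁻¹ *ᵥ one))
    (hs : s = μ ⬝ᵥ Q *ᵥ μ) :
    (one ⬝ᵥ A⁻¹ *ᵥ one)⁻¹ • (A⁻¹ *ᵥ one) =
      (one ⬝ᵥ S⁻¹ *ᵥ one)⁻¹ • (S⁻¹ *ᵥ one) - ((1 + Rg) / (1 + s)) • (Q *ᵥ μ) := by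
  rcases Nat.eq_zero_or_pos k with hk | hk
  · subst hk; exact Subsingleton.elim _ _
  -- basic symmetry / positivity facts for S⁻¹
  have hTsymm : S⁻¹ᵀ = S⁻¹ := by simpa [Matrix.IsHermitian, conjTranspose_eq_transpose_of_trivial] using hS.inv.1
  have hsym : ∀ x y : Fin k → ℝ, x ⬝ᵥ S⁻¹ *ᵥ y = y ⬝ᵥ S⁻¹ *ᵥ x := by
    intro x y
    rw [dotProduct_mulVec, ← mulVec_transpose, hTsymm, dotProduct_comm]
  have hq : ∀ x : Fin k → ℝ, 0 ≤ x ⬝ᵥ S⁻¹ *ᵥ x := by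
    intro x
    rcases eq_or_ne x 0 with h | h
    · simp [h]
    · simpa using (hS.inv.dotProduct_mulVec_pos h).le
  have hvecmul : one ᵥ* S⁻¹ = S⁻¹ *ᵥ one := by rw [← mulVec_transpose, hTsymm]
  -- scalars
  set a : ℝ := one ⬝ᵥ S⁻¹ *ᵥ one with ha_def
  set b : ℝ := one ⬝ᵥ S⁻¹ *ᵥ μ with hb_def
  set c : ℝ := μ ⬝ᵥ S⁻¹ *ᵥ μ with hc_def
  set v : Fin k → ℝ := S⁻¹ *ᵥ one with hv_def
  set w : Fin k → ℝ := S⁻¹ *ᵥ μ with hw_def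
  have hone_ne : one ≠ 0 := by
    intro h
    have := congrFun h ⟨0, hk⟩
    simp [hone] at this
  have ha : 0 < a := by simpa using hS.inv.dotProduct_mulVec_pos hone_ne
  have hμv : μ ⬝ᵥ v = b := hsym μ one
  have honev : one ⬝ᵥ v = a := rfl
  have honew : one ⬝ᵥ w = b := rfl
  have hμw : μ ⬝ᵥ w = c := rfl
  set u : Fin k → ℝ := one + μ with hu_def
  set d : ℝ := 1 + (a + 2*b + c) with hd_def
  have huv : u ⬝ᵥ v = a + b := by rw [hu_def, add_dotProduct, honev, hμv]
  have huw : u ⬝ᵥ w = b + c := by rw [hu_def, add_dotProduct, honew, hμw]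
  have hSiu : S⁻¹ *ᵥ u = v + w := by rw [hu_def, mulVec_add]
  have huu : u ⬝ᵥ S⁻¹ *ᵥ u = a + 2*b + c := by
    rw [hSiu, dotProduct_add, huv, huw]; ring
  have hd : 0 < d := by
    rw [hd_def, ← huu]
    have := hq u
    linarith
  have hd' : d ≠ 0 := hd.ne'
  have ha' : a ≠ 0 := ha.ne'
  -- s = c - b^2/a and s ≥ 0
  have hQμ : Q *ᵥ μ = w - (a⁻¹ * b) • v := by
    rw [hQ, sub_mulVec, smul_mulVec, vmv_mulVec, hvecmul, dotProduct_comm v μ, hμv]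
    try rw [smul_smul]
    try rfl
  have hs_eq : s = c - a⁻¹ * b * b := by
    rw [hs, hQμ, dotProduct_sub, dotProduct_smul, hμw, hμv, smul_eq_mul]; try ring
  have hs_nonneg : 0 ≤ s := by
    have key : (μ - (a⁻¹ * b) • one) ⬝ᵥ S⁻¹ *ᵥ (μ - (a⁻¹ * b) • one) = s := by
      rw [mulVec_sub, mulVec_smul, ← hw_def, ← hv_def]
      simp only [dotProduct_sub, sub_dotProduct, dotProduct_smul, smul_dotProduct,
        smul_eq_mul, hμw, hμv, honew, honev, hs_eq]
      try field_simp
      try ring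
    rw [← key]; exact hq _
  have hs1 : (0:ℝ) < 1 + s := by linarith
  -- A is positive definite
  have hApd : A.PosDef := by
    refine Matrix.PosDef.of_dotProduct_mulVec_pos ?_ ?_
    · show Aᴴ = A
      rw [hA]
      have huuH : (vecMulVec u u)ᴴ = vecMulVec u u := by
        ext i j
        simp [conjTranspose_apply, vecMulVec_apply, mul_comm]
      rw [conjTranspose_add, hS.1.eq, huuH]
    · intro x hx
      have hstar : star x = x := by simp
      rw [hA, add_mulVec, vmv_mulVec, dotProduct_add, dotProduct_smul, smul_eq_mul,
        hstar, dotProduct_comm x u]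
      have h1 : 0 < star x ⬝ᵥ S *ᵥ x := hS.dotProduct_mulVec_pos hx
      have h2 : (0:ℝ) ≤ (u ⬝ᵥ x) * (u ⬝ᵥ x) := mul_self_nonneg _
      rw [hstar] at h1
      linarith
  -- the Sherman–Morrison vector
  set x : Fin k → ℝ := v - ((a+b)/d) • (v + w) with hx_def
  have hSv : S *ᵥ v = one := by
    rw [hv_def, mulVec_mulVec, mul_nonsing_inv _ (isUnit_iff_isUnit_det _ |>.1 hS.isUnit), one_mulVec]
  have hSw : S *ᵥ w = μ := by
    rw [hw_def, mulVec_mulVec, mul_nonsing_inv _ (isUnit_iff_isUnit_det _ |>.1 hS.isUnit), one_mulVec]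
  have hux : u ⬝ᵥ x = (a+b)/d := by
    rw [hx_def, dotProduct_sub, dotProduct_smul, dotProduct_add, huv, huw, smul_eq_mul]
    field_simp
    rw [hd_def]; ring
  have hAx : A *ᵥ x = one := by
    rw [hA, add_mulVec, vmv_mulVec, hux]
    have hSx : S *ᵥ x = one - ((a+b)/d) • u := by
      rw [hx_def, mulVec_sub, mulVec_smul, mulVec_add, hSv, hSw, hu_def]
    rw [hSx]
    abel
  have hAinv : A⁻¹ *ᵥ one = x := by
    rw [← hAx, mulVec_mulVec, nonsing_inv_mul _ (isUnit_iff_isUnit_det _ |>.1 hApd.isUnit), one_mulVec]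
  have honex : one ⬝ᵥ x = a - ((a+b)/d) * (a+b) := by
    rw [hx_def, dotProduct_sub, dotProduct_smul, dotProduct_add, honev, honew, smul_eq_mul]
  have hd'' : (1:ℝ) + (a + 2*b + c) ≠ 0 := hd_def ▸ hd'
  have hc1 : (1:ℝ) + (c - a⁻¹ * b * b) ≠ 0 := by rw [← hs_eq]; exact hs1.ne'
  have hdenom : a - ((a+b)/d) * (a+b) = a * (1+s) / d := by
    rw [hs_eq]
    field_simp
    rw [hd_def]; ring
  have hKinv : (a - ((a+b)/d) * (a+b))⁻¹ = d / (a * (1+s)) := by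
    rw [hdenom, inv_div]
  have hC2 : (a - ((a+b)/d) * (a+b))⁻¹ * ((a+b)/d) = (1 + b/a)/(1+s) := by
    rw [hKinv]
    field_simp
  have hC1 : (a - ((a+b)/d) * (a+b))⁻¹ * (1 - (a+b)/d)
      = a⁻¹ + ((1 + b/a)/(1+s)) * (a⁻¹ * b) := by
    have has : a * s = a * c - b * b := by rw [hs_eq]; field_simp
    rw [hKinv]
    field_simp
    linear_combination (b^2 - a*c) * hd_def - has
  -- finish
  rw [hAinv, honex, hQμ, hRg]
  funext i
  simp only [hx_def, Pi.smul_apply, Pi.sub_apply, Pi.add_apply, smul_eq_mul]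
  linear_combination (v i) * hC1 - (w i) * hC2
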